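/- Let L ∈ ℝ^{2n×2} have full column rank, set β_j = (det(LᵀL))^{1/4}, and let β ≥ β_j. Define c̃ = ‖L₂‖₂/β and f̃ = (−L₁ᵀL₂ ± √(β⁴ − β_j⁴)) / (β ‖L₂‖₂). Then both rows of D̃ Lᵀ, where D̃ = [[c̃, f̃],[0, c̃⁻¹]], have Euclidean norm exactly β. -/

import Mathlib

open Matrix

noncomputable def vecEnorm {m : ℕ} (v : Fin m → ℝ) : ℝ := Real.sqrt (∑ i, v i ^ 2)

noncomputable def frob {m n : ℕ} (A : Matrix (Fin m) (Fin n) ℝ) : ℝ :=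
  Real.sqrt (∑ i, ∑ j, A i j ^ 2)

noncomputable def specNorm {m n : ℕ} (A : Matrix (Fin m) (Fin n) ℝ) : ℝ :=
  ‖(Matrix.toEuclideanLin A).toContinuousLinearMap‖

noncomputable def sigmaMax (B : Matrix (Fin 2) (Fin 2) ℝ) : ℝ :=
  Real.sqrt (max ((show (Bᵀ * B).IsHermitian by
                    simpa using Matrix.isHermitian_conjTranspose_mul_self B).eigenvalues 0)
                 ((show (Bᵀ * B).IsHermitian by
                    simpa using Matrix.isHermitian_conjTranspose_mul_self B).eigenvalues 1))

noncomputable def sigmaMin (B : Matrix (Fin 2) (Fin 2) ℝ) : ℝ :=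
  Real.sqrt (min ((show (Bᵀ * B).IsHermitian by
                    simpa using Matrix.isHermitian_conjTranspose_mul_self B).eigenvalues 0)
                 ((show (Bᵀ * B).IsHermitian by
                    simpa using Matrix.isHermitian_conjTranspose_mul_self B).eigenvalues 1))

lemma sum_sub_sq' {m : ℕ} (p q : ℝ) (v w : Fin m → ℝ) :
    ∑ j, (p * v j - q * w j) ^ 2
      = p ^ 2 * ∑ j, v j ^ 2 - (2 * p * q) * ∑ j, v j * w j + q ^ 2 * ∑ j, w j ^ 2 := by
  rw [Finset.sum_congr rfl (fun j _ => show (p * v j - q * w j) ^ 2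
      = p ^ 2 * v j ^ 2 - (2 * p * q) * (v j * w j) + q ^ 2 * w j ^ 2 from by ring)]
  rw [Finset.sum_add_distrib, Finset.sum_sub_distrib, ← Finset.mul_sum, ← Finset.mul_sum,
    ← Finset.mul_sum]

lemma sum_add_sq' {m : ℕ} (p q : ℝ) (v w : Fin m → ℝ) :
    ∑ j, (p * v j + q * w j) ^ 2
      = p ^ 2 * ∑ j, v j ^ 2 + (2 * p * q) * ∑ j, v j * w j + q ^ 2 * ∑ j, w j ^ 2 := by
  rw [Finset.sum_congr rfl (fun j _ => show (p * v j + q * w j) ^ 2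
      = p ^ 2 * v j ^ 2 + (2 * p * q) * (v j * w j) + q ^ 2 * w j ^ 2 from by ring)]
  rw [Finset.sum_add_distrib, Finset.sum_add_distrib, ← Finset.mul_sum, ← Finset.mul_sum,
    ← Finset.mul_sum]

theorem rows_of_equilibrated_scaling {n : ℕ}
    (L : Matrix (Fin (2*n)) (Fin 2) ℝ)
    (hLI : LinearIndependent ℝ ![fun i => L i 0, fun i => L i 1])
    (βj β : ℝ)
    (hβj : βj = Real.sqrt (Real.sqrt (Lᵀ * L).det))
    (hβ : βj ≤ β)
    (ε : ℝ) (hε : ε = 1 ∨ ε = -1)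
    (ct ft : ℝ)
    (hct : ct = vecEnorm (fun i => L i 1) / β)
    (hft : ft = (-(∑ i, L i 0 * L i 1) + ε * Real.sqrt (β ^ 4 - βj ^ 4)) /
        (β * vecEnorm (fun i => L i 1))) :
    vecEnorm (fun j => ((!![ct, ft; 0, ct⁻¹] : Matrix (Fin 2) (Fin 2) ℝ) * Lᵀ) 0 j) = β ∧
    vecEnorm (fun j => ((!![ct, ft; 0, ct⁻¹] : Matrix (Fin 2) (Fin 2) ℝ) * Lᵀ) 1 j) = β := by
  obtain ⟨hw, hpair⟩ := linearIndependent_fin2.mp hLI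
  simp only [Matrix.cons_val_one, Matrix.head_cons, Matrix.cons_val_zero] at hw hpair
  set aa : ℝ := ∑ i, L i 0 ^ 2 with haa
  set bb : ℝ := ∑ i, L i 0 * L i 1 with hbb
  set cc : ℝ := ∑ i, L i 1 ^ 2 with hcc
  -- cc > 0
  have hc : 0 < cc := by
    obtain ⟨i, hi⟩ : ∃ i, L i 1 ≠ 0 := by
      by_contra h
      push_neg at h
      exact hw (funext h)
    exact Finset.sum_pos' (fun j _ => sq_nonneg _)
      ⟨i, Finset.mem_univ i, by positivity⟩
  -- Cauchy-Schwarz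
  have hcs : bb ^ 2 ≤ aa * cc := Finset.sum_mul_sq_le_sq_mul_sq _ _ _
  -- strict
  have hne : bb ^ 2 ≠ aa * cc := by
    intro heq
    have hz : ∑ j, (cc * L j 0 - bb * L j 1) ^ 2 = 0 := by
      rw [sum_sub_sq' cc bb (fun i => L i 0) (fun i => L i 1)]
      rw [← haa, ← hbb, ← hcc]
      nlinarith [heq]
    have hall : ∀ j ∈ Finset.univ, (cc * L j 0 - bb * L j 1) ^ 2 = 0 :=
      (Finset.sum_eq_zero_iff_of_nonneg (fun j _ => sq_nonneg _)).mp hz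
    apply hpair (bb / cc)
    funext j
    have := pow_eq_zero_iff (n := 2) (by norm_num) |>.mp (hall j (Finset.mem_univ j))
    have hj : cc * L j 0 = bb * L j 1 := by linarith
    show (bb / cc) * L j 1 = L j 0
    field_simp
    linarith
  have hdet : (Lᵀ * L).det = aa * cc - bb ^ 2 := by
    have e00 : (Lᵀ * L) 0 0 = aa := by
      rw [haa]; simp [Matrix.mul_apply, sq]
    have e11 : (Lᵀ * L) 1 1 = cc := by
      rw [hcc]; simp [Matrix.mul_apply, sq]
    have e01 : (Lᵀ * L) 0 1 = bb := by
      rw [hbb]; simp [Matrix.mul_apply]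
    have e10 : (Lᵀ * L) 1 0 = bb := by
      rw [hbb]; simp [Matrix.mul_apply, mul_comm]
    rw [Matrix.det_fin_two, e00, e11, e01, e10]; ring
  have hd : 0 < aa * cc - bb ^ 2 :=
    lt_of_le_of_ne (by linarith) (by intro h; exact hne (by linarith))
  have hβj4 : βj ^ 4 = aa * cc - bb ^ 2 := by
    rw [hβj, ← hdet]
    rw [show (4 : ℕ) = 2 * 2 by norm_num, pow_mul, Real.sq_sqrt (Real.sqrt_nonneg _),
      Real.sq_sqrt (by rw [hdet]; linarith)]
  have hβj0 : 0 < βj := by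
    rw [hβj]
    apply Real.sqrt_pos.mpr
    apply Real.sqrt_pos.mpr
    rw [hdet]; linarith
  have hβ0 : 0 < β := lt_of_lt_of_le hβj0 hβ
  have hβ4 : βj ^ 4 ≤ β ^ 4 := pow_le_pow_left₀ hβj0.le hβ 4
  set s : ℝ := Real.sqrt (β ^ 4 - βj ^ 4) with hs
  have hs2 : s ^ 2 = β ^ 4 - βj ^ 4 := Real.sq_sqrt (by linarith)
  have hen : vecEnorm (fun i => L i 1) = Real.sqrt cc := rfl
  have hsc : Real.sqrt cc > 0 := Real.sqrt_pos.mpr hc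
  have hcc2 : Real.sqrt cc ^ 2 = cc := Real.sq_sqrt hc.le
  have hrow0 : ∀ j, ((!![ct, ft; 0, ct⁻¹] : Matrix (Fin 2) (Fin 2) ℝ) * Lᵀ) 0 j
      = ct * L j 0 + ft * L j 1 := by
    intro j
    simp [Matrix.mul_apply, Fin.sum_univ_two]
  have hrow1 : ∀ j, ((!![ct, ft; 0, ct⁻¹] : Matrix (Fin 2) (Fin 2) ℝ) * Lᵀ) 1 j
      = ct⁻¹ * L j 1 := by
    intro j
    simp [Matrix.mul_apply, Fin.sum_univ_two]
  have hct0 : ct = Real.sqrt cc / β := by rw [hct, hen]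
  constructor
  · have hsum : ∑ j, (ct * L j 0 + ft * L j 1) ^ 2
        = ct ^ 2 * aa + (2 * ct * ft) * bb + ft ^ 2 * cc := by
      rw [sum_add_sq' ct ft (fun i => L i 0) (fun i => L i 1)]
    have key : ct ^ 2 * aa + (2 * ct * ft) * bb + ft ^ 2 * cc = β ^ 2 := by
      have hε2 : ε ^ 2 = 1 := by rcases hε with h | h <;> rw [h] <;> norm_num
      have hβne : β ≠ 0 := ne_of_gt hβ0
      have htne : Real.sqrt cc ≠ 0 := ne_of_gt hsc
      obtain ⟨u, hu⟩ : ∃ u, -bb + ε * s = u := ⟨_, rfl⟩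
      rw [hct0, hft, hen, hu]
      have e1 : (Real.sqrt cc / β) ^ 2 * aa = cc * aa / β ^ 2 := by
        rw [div_pow, hcc2]; ring
      have e2 : 2 * (Real.sqrt cc / β) * (u / (β * Real.sqrt cc)) * bb
          = 2 * u * bb / β ^ 2 := by
        field_simp
      have e3 : (u / (β * Real.sqrt cc)) ^ 2 * cc = u ^ 2 / β ^ 2 := by
        rw [div_pow, mul_pow, hcc2]
        field_simp
      rw [e1, e2, e3, ← add_div, ← add_div,
        div_eq_iff (pow_ne_zero 2 hβne), ← hu]
      linear_combination s ^ 2 * hε2 + hs2 - hβj4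
    unfold vecEnorm
    rw [show (∑ j, (((!![ct, ft; 0, ct⁻¹] : Matrix (Fin 2) (Fin 2) ℝ) * Lᵀ) 0 j) ^ 2)
        = ∑ j, (ct * L j 0 + ft * L j 1) ^ 2 from
      Finset.sum_congr rfl fun j _ => by rw [hrow0 j]]
    rw [hsum, key, Real.sqrt_sq hβ0.le]
  · have hsum : ∑ j, (ct⁻¹ * L j 1) ^ 2 = ct⁻¹ ^ 2 * cc := by
      rw [hcc, Finset.mul_sum]
      exact Finset.sum_congr rfl fun j _ => by ring
    have key : ct⁻¹ ^ 2 * cc = β ^ 2 := by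
      rw [hct0]
      field_simp
      exact hcc2.symm
    unfold vecEnorm
    rw [show (∑ j, (((!![ct, ft; 0, ct⁻¹] : Matrix (Fin 2) (Fin 2) ℝ) * Lᵀ) 1 j) ^ 2)
        = ∑ j, (ct⁻¹ * L j 1) ^ 2 from
      Finset.sum_congr rfl fun j _ => by rw [hrow1 j]]
    rw [hsum, key, Real.sqrt_sq hβ0.le]
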